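/- Let X and Y be Banach spaces, 1 < p < ∞, x ∈ X \ {0}, y ∈ Y \ {0}. If (x, y) is a semi denting point of B_{X ⊕_p Y}, then x/‖x‖ is a semi denting point of B_X and y/‖y‖ is a semi denting point of B_Y. -/

import Mathlib

/-- A point `x₀` of the closed unit ball of `Z` is a *semi denting point* of `B_Z` if for every
`ε > 0` there is a slice `S(B_Z, f, δ) = {z ∈ B_Z : f z > ‖f‖ - δ}` contained in `B(x₀, ε)`. -/
def IsSemiDentingPointOfBall {Z : Type*} [NormedAddCommGroup Z] [NormedSpace ℝ Z] (x : Z) :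
    Prop :=
  ‖x‖ ≤ 1 ∧ ∀ ε > (0 : ℝ), ∃ (f : Z →L[ℝ] ℝ) (δ : ℝ), 0 < δ ∧
    {z : Z | ‖z‖ ≤ 1 ∧ f z > ‖f‖ - δ} ⊆ Metric.closedBall x ε

section Aux

variable {X Y : Type*} [NormedAddCommGroup X] [NormedSpace ℝ X]
  [NormedAddCommGroup Y] [NormedSpace ℝ Y]
  (p : ENNReal) [Fact (1 ≤ p)]

lemma myFstLe (hp : p ≠ ⊤) (w : WithLp p (X × Y)) : ‖w.fst‖ ≤ ‖w‖ := by
  have hq : 0 < p.toReal := ENNReal.toReal_pos (zero_lt_one.trans_le Fact.out).ne' hp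
  rw [WithLp.prod_norm_eq_add hq]
  calc ‖w.fst‖ = (‖w.fst‖ ^ p.toReal) ^ (1 / p.toReal) := by
        rw [one_div, Real.rpow_rpow_inv (norm_nonneg _) hq.ne']
    _ ≤ _ := Real.rpow_le_rpow (by positivity) (le_add_of_nonneg_right (by positivity))
        (by positivity)

lemma mySndLe (hp : p ≠ ⊤) (w : WithLp p (X × Y)) : ‖w.snd‖ ≤ ‖w‖ := by
  have hq : 0 < p.toReal := ENNReal.toReal_pos (zero_lt_one.trans_le Fact.out).ne' hp
  rw [WithLp.prod_norm_eq_add hq]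
  calc ‖w.snd‖ = (‖w.snd‖ ^ p.toReal) ^ (1 / p.toReal) := by
        rw [one_div, Real.rpow_rpow_inv (norm_nonneg _) hq.ne']
    _ ≤ _ := Real.rpow_le_rpow (by positivity) (le_add_of_nonneg_left (by positivity))
        (by positivity)

set_option maxHeartbeats 1000000 in
lemma myAuxFst (hp : p ≠ ⊤) (x : X) (y : Y) (hx : x ≠ 0)
    (h : IsSemiDentingPointOfBall ((WithLp.equiv p (X × Y)).symm (x, y))) :
    IsSemiDentingPointOfBall (‖x‖⁻¹ • x) := by
  have hq : 0 < p.toReal := ENNReal.toReal_pos (zero_lt_one.trans_le Fact.out).ne' hp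
  have hxn : (0:ℝ) < ‖x‖ := norm_pos_iff.mpr hx
  constructor
  · rw [norm_smul, norm_inv, norm_norm, inv_mul_cancel₀ hxn.ne']
  intro ε hε
  set ε' : ℝ := ε * ‖x‖ / 2 with hε'def
  have hε' : 0 < ε' := by positivity
  obtain ⟨f, δ, hδ, hsub⟩ := h.2 ε' hε'
  set J₁ : X →L[ℝ] WithLp p (X × Y) :=
    ((WithLp.prodContinuousLinearEquiv p ℝ X Y).symm : X × Y →L[ℝ] WithLp p (X × Y)).comp
      (ContinuousLinearMap.inl ℝ X Y) with hJ₁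
  set J₂ : Y →L[ℝ] WithLp p (X × Y) :=
    ((WithLp.prodContinuousLinearEquiv p ℝ X Y).symm : X × Y →L[ℝ] WithLp p (X × Y)).comp
      (ContinuousLinearMap.inr ℝ X Y) with hJ₂
  set f₁ := f.comp J₁ with hf₁
  set f₂ := f.comp J₂ with hf₂
  have hdecomp : ∀ a : X, ∀ b : Y, f ((WithLp.equiv p (X × Y)).symm (a, b)) = f₁ a + f₂ b := by
    intro a b
    have : (WithLp.equiv p (X × Y)).symm (a, b) = J₁ a + J₂ b := by
      apply (WithLp.equiv p (X × Y)).injective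
      simp [hJ₁, hJ₂, Prod.ext_iff]
    rw [this, map_add]
    rfl
  -- near-optimal point in slice
  obtain ⟨z₁, hz₁n, hfz₁⟩ := f.exists_lt_apply_of_lt_opNorm (show ‖f‖ - δ/2 < ‖f‖ by linarith)
  set z₀ : WithLp p (X × Y) := if 0 ≤ f z₁ then z₁ else -z₁ with hz₀def
  have hz₀n : ‖z₀‖ ≤ 1 := by
    rw [hz₀def]; split <;> simpa using hz₁n.le
  have hfz₀ : ‖f‖ - δ/2 < f z₀ := by
    rw [hz₀def]
    rcases le_or_gt 0 (f z₁) with h0 | h0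
    · rw [if_pos h0]
      rwa [Real.norm_eq_abs, abs_of_nonneg h0] at hfz₁
    · rw [if_neg (not_le.mpr h0), map_neg]
      rwa [Real.norm_eq_abs, abs_of_neg h0] at hfz₁
  have hz₀mem : z₀ ∈ {z : WithLp p (X × Y) | ‖z‖ ≤ 1 ∧ f z > ‖f‖ - δ} :=
    ⟨hz₀n, by linarith⟩
  have hz₀close : ‖z₀ - (WithLp.equiv p (X × Y)).symm (x, y)‖ ≤ ε' := by
    have := hsub hz₀mem
    rwa [Metric.mem_closedBall, dist_eq_norm] at this
  set a : X := z₀.fst with ha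
  set b : Y := z₀.snd with hb
  have ha_x : ‖a - x‖ ≤ ε' := by
    calc ‖a - x‖ = ‖(z₀ - (WithLp.equiv p (X × Y)).symm (x, y)).fst‖ := rfl
      _ ≤ _ := myFstLe p hp _
      _ ≤ ε' := hz₀close
  have hz₀eq : (WithLp.equiv p (X × Y)).symm (a, b) = z₀ := rfl
  have hab_n : ‖(WithLp.equiv p (X × Y)).symm (a, b)‖ ≤ 1 := hz₀eq ▸ hz₀n
  have hfab : ‖f‖ - δ/2 < f ((WithLp.equiv p (X × Y)).symm (a, b)) := hz₀eq ▸ hfz₀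
  clear_value a b
  clear hz₀eq hz₀mem hz₀close hz₀n hfz₀ hz₀def
  refine ⟨f₁, δ / (2 * (‖a‖ + 1)), by positivity, ?_⟩
  rintro u ⟨hu1, hu2⟩
  set z : WithLp p (X × Y) := (WithLp.equiv p (X × Y)).symm (‖a‖ • u, b) with hzdef
  have hz_norm : ‖z‖ ≤ 1 := by
    refine le_trans ?_ hab_n
    rw [WithLp.prod_norm_eq_add hq, WithLp.prod_norm_eq_add hq]
    refine Real.rpow_le_rpow (by positivity) ?_ (by positivity)
    have h1 : ‖(z.fst : X)‖ ≤ ‖a‖ := by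
      show ‖‖a‖ • u‖ ≤ ‖a‖
      rw [norm_smul, norm_norm]
      exact mul_le_of_le_one_right (norm_nonneg _) hu1
    gcongr
    · exact h1
    · exact le_of_eq rfl
  have hfa : f₁ a ≤ ‖f₁‖ * ‖a‖ :=
    le_trans (le_abs_self _) (by simpa [Real.norm_eq_abs] using f₁.le_opNorm a)
  have hAd : ‖a‖ * (δ / (2 * (‖a‖ + 1))) ≤ δ / 2 := by
    rw [mul_div_assoc', div_le_div_iff₀ (by positivity) (by positivity)]
    have hA : (0:ℝ) ≤ ‖a‖ := norm_nonneg a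
    nlinarith
  have hfz : f z > ‖f‖ - δ := by
    have e1 : f z = ‖a‖ * f₁ u + f₂ b := by
      rw [hzdef, hdecomp, map_smul, smul_eq_mul]
    have e2 : f ((WithLp.equiv p (X × Y)).symm (a, b)) = f₁ a + f₂ b := hdecomp a b
    have h3 : ‖a‖ * (‖f₁‖ - δ / (2 * (‖a‖ + 1))) ≤ ‖a‖ * f₁ u :=
      mul_le_mul_of_nonneg_left hu2.le (norm_nonneg a)
    rw [e1]
    rw [e2] at hfab
    nlinarith [norm_nonneg a]
  have hzmem := hsub ⟨hz_norm, hfz⟩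
  rw [Metric.mem_closedBall, dist_eq_norm] at hzmem
  have hzx : ‖‖a‖ • u - x‖ ≤ ε' := by
    calc ‖‖a‖ • u - x‖ = ‖(z - (WithLp.equiv p (X × Y)).symm (x, y)).fst‖ := rfl
      _ ≤ _ := myFstLe p hp _
      _ ≤ ε' := hzmem
  rw [Metric.mem_closedBall, dist_eq_norm]
  have key : u - ‖x‖⁻¹ • x = (1 - ‖x‖⁻¹ * ‖a‖) • u + ‖x‖⁻¹ • (‖a‖ • u - x) := by
    module
  rw [key]
  have habs : |‖x‖ - ‖a‖| ≤ ε' := le_trans (abs_norm_sub_norm_le x a) (by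
    rw [← norm_neg]; simpa using ha_x)
  have n1 : ‖(1 - ‖x‖⁻¹ * ‖a‖) • u‖ ≤ |1 - ‖x‖⁻¹ * ‖a‖| := by
    rw [norm_smul, Real.norm_eq_abs]
    exact mul_le_of_le_one_right (abs_nonneg _) hu1
  have n2 : ‖‖x‖⁻¹ • (‖a‖ • u - x)‖ ≤ ‖x‖⁻¹ * ε' := by
    rw [norm_smul, Real.norm_eq_abs, abs_of_pos (show (0:ℝ) < ‖x‖⁻¹ by positivity)]
    exact mul_le_mul_of_nonneg_left hzx (by positivity)
  have n3 : |1 - ‖x‖⁻¹ * ‖a‖| ≤ ‖x‖⁻¹ * ε' := by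
    have e : 1 - ‖x‖⁻¹ * ‖a‖ = ‖x‖⁻¹ * (‖x‖ - ‖a‖) := by field_simp
    rw [e, abs_mul, abs_of_pos (show (0:ℝ) < ‖x‖⁻¹ by positivity)]
    exact mul_le_mul_of_nonneg_left habs (by positivity)
  have n4 : ‖x‖⁻¹ * ε' + ‖x‖⁻¹ * ε' = ε := by
    rw [hε'def]; field_simp; norm_num
  calc ‖(1 - ‖x‖⁻¹ * ‖a‖) • u + ‖x‖⁻¹ • (‖a‖ • u - x)‖
      ≤ ‖(1 - ‖x‖⁻¹ * ‖a‖) • u‖ + ‖‖x‖⁻¹ • (‖a‖ • u - x)‖ := norm_add_le _ _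
    _ ≤ ε := by linarith

set_option maxHeartbeats 1000000 in
lemma myAuxSnd (hp : p ≠ ⊤) (x : X) (y : Y) (hy : y ≠ 0)
    (h : IsSemiDentingPointOfBall ((WithLp.equiv p (X × Y)).symm (x, y))) :
    IsSemiDentingPointOfBall (‖y‖⁻¹ • y) := by
  have hq : 0 < p.toReal := ENNReal.toReal_pos (zero_lt_one.trans_le Fact.out).ne' hp
  have hyn : (0:ℝ) < ‖y‖ := norm_pos_iff.mpr hy
  constructor
  · rw [norm_smul, norm_inv, norm_norm, inv_mul_cancel₀ hyn.ne']
  intro ε hε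
  set ε' : ℝ := ε * ‖y‖ / 2 with hε'def
  have hε' : 0 < ε' := by positivity
  obtain ⟨f, δ, hδ, hsub⟩ := h.2 ε' hε'
  set J₁ : X →L[ℝ] WithLp p (X × Y) :=
    ((WithLp.prodContinuousLinearEquiv p ℝ X Y).symm : X × Y →L[ℝ] WithLp p (X × Y)).comp
      (ContinuousLinearMap.inl ℝ X Y) with hJ₁
  set J₂ : Y →L[ℝ] WithLp p (X × Y) :=
    ((WithLp.prodContinuousLinearEquiv p ℝ X Y).symm : X × Y →L[ℝ] WithLp p (X × Y)).comp
      (ContinuousLinearMap.inr ℝ X Y) with hJ₂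
  set f₁ := f.comp J₁ with hf₁
  set f₂ := f.comp J₂ with hf₂
  have hdecomp : ∀ a : X, ∀ b : Y, f ((WithLp.equiv p (X × Y)).symm (a, b)) = f₁ a + f₂ b := by
    intro a b
    have : (WithLp.equiv p (X × Y)).symm (a, b) = J₁ a + J₂ b := by
      apply (WithLp.equiv p (X × Y)).injective
      simp [hJ₁, hJ₂, Prod.ext_iff]
    rw [this, map_add]
    rfl
  -- near-optimal point in slice
  obtain ⟨z₁, hz₁n, hfz₁⟩ := f.exists_lt_apply_of_lt_opNorm (show ‖f‖ - δ/2 < ‖f‖ by linarith)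
  set z₀ : WithLp p (X × Y) := if 0 ≤ f z₁ then z₁ else -z₁ with hz₀def
  have hz₀n : ‖z₀‖ ≤ 1 := by
    rw [hz₀def]; split <;> simpa using hz₁n.le
  have hfz₀ : ‖f‖ - δ/2 < f z₀ := by
    rw [hz₀def]
    rcases le_or_gt 0 (f z₁) with h0 | h0
    · rw [if_pos h0]
      rwa [Real.norm_eq_abs, abs_of_nonneg h0] at hfz₁
    · rw [if_neg (not_le.mpr h0), map_neg]
      rwa [Real.norm_eq_abs, abs_of_neg h0] at hfz₁
  have hz₀mem : z₀ ∈ {z : WithLp p (X × Y) | ‖z‖ ≤ 1 ∧ f z > ‖f‖ - δ} :=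
    ⟨hz₀n, by linarith⟩
  have hz₀close : ‖z₀ - (WithLp.equiv p (X × Y)).symm (x, y)‖ ≤ ε' := by
    have := hsub hz₀mem
    rwa [Metric.mem_closedBall, dist_eq_norm] at this
  set a : X := z₀.fst with ha
  set b : Y := z₀.snd with hb
  have hb_y : ‖b - y‖ ≤ ε' := by
    calc ‖b - y‖ = ‖(z₀ - (WithLp.equiv p (X × Y)).symm (x, y)).snd‖ := rfl
      _ ≤ _ := mySndLe p hp _
      _ ≤ ε' := hz₀close
  have hz₀eq : (WithLp.equiv p (X × Y)).symm (a, b) = z₀ := rfl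
  have hab_n : ‖(WithLp.equiv p (X × Y)).symm (a, b)‖ ≤ 1 := hz₀eq ▸ hz₀n
  have hfab : ‖f‖ - δ/2 < f ((WithLp.equiv p (X × Y)).symm (a, b)) := hz₀eq ▸ hfz₀
  clear_value a b
  clear hz₀eq hz₀mem hz₀close hz₀n hfz₀ hz₀def
  refine ⟨f₂, δ / (2 * (‖b‖ + 1)), by positivity, ?_⟩
  rintro u ⟨hu1, hu2⟩
  set z : WithLp p (X × Y) := (WithLp.equiv p (X × Y)).symm (a, ‖b‖ • u) with hzdef
  have hz_norm : ‖z‖ ≤ 1 := by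
    refine le_trans ?_ hab_n
    rw [WithLp.prod_norm_eq_add hq, WithLp.prod_norm_eq_add hq]
    refine Real.rpow_le_rpow (by positivity) ?_ (by positivity)
    have h1 : ‖(z.snd : Y)‖ ≤ ‖b‖ := by
      show ‖‖b‖ • u‖ ≤ ‖b‖
      rw [norm_smul, norm_norm]
      exact mul_le_of_le_one_right (norm_nonneg _) hu1
    gcongr
    · exact le_of_eq rfl
    · exact h1
  have hfb : f₂ b ≤ ‖f₂‖ * ‖b‖ :=
    le_trans (le_abs_self _) (by simpa [Real.norm_eq_abs] using f₂.le_opNorm b)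
  have hAd : ‖b‖ * (δ / (2 * (‖b‖ + 1))) ≤ δ / 2 := by
    rw [mul_div_assoc', div_le_div_iff₀ (by positivity) (by positivity)]
    have hA : (0:ℝ) ≤ ‖b‖ := norm_nonneg b
    nlinarith
  have hfz : f z > ‖f‖ - δ := by
    have e1 : f z = f₁ a + ‖b‖ * f₂ u := by
      rw [hzdef, hdecomp, map_smul, smul_eq_mul]
    have e2 : f ((WithLp.equiv p (X × Y)).symm (a, b)) = f₁ a + f₂ b := hdecomp a b
    have h3 : ‖b‖ * (‖f₂‖ - δ / (2 * (‖b‖ + 1))) ≤ ‖b‖ * f₂ u :=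
      mul_le_mul_of_nonneg_left hu2.le (norm_nonneg b)
    rw [e1]
    rw [e2] at hfab
    nlinarith [norm_nonneg b]
  have hzmem := hsub ⟨hz_norm, hfz⟩
  rw [Metric.mem_closedBall, dist_eq_norm] at hzmem
  have hzy : ‖‖b‖ • u - y‖ ≤ ε' := by
    calc ‖‖b‖ • u - y‖ = ‖(z - (WithLp.equiv p (X × Y)).symm (x, y)).snd‖ := rfl
      _ ≤ _ := mySndLe p hp _
      _ ≤ ε' := hzmem
  rw [Metric.mem_closedBall, dist_eq_norm]
  have key : u - ‖y‖⁻¹ • y = (1 - ‖y‖⁻¹ * ‖b‖) • u + ‖y‖⁻¹ • (‖b‖ • u - y) := by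
    module
  rw [key]
  have habs : |‖y‖ - ‖b‖| ≤ ε' := le_trans (abs_norm_sub_norm_le y b) (by
    rw [← norm_neg]; simpa using hb_y)
  have n1 : ‖(1 - ‖y‖⁻¹ * ‖b‖) • u‖ ≤ |1 - ‖y‖⁻¹ * ‖b‖| := by
    rw [norm_smul, Real.norm_eq_abs]
    exact mul_le_of_le_one_right (abs_nonneg _) hu1
  have n2 : ‖‖y‖⁻¹ • (‖b‖ • u - y)‖ ≤ ‖y‖⁻¹ * ε' := by
    rw [norm_smul, Real.norm_eq_abs, abs_of_pos (show (0:ℝ) < ‖y‖⁻¹ by positivity)]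
    exact mul_le_mul_of_nonneg_left hzy (by positivity)
  have n3 : |1 - ‖y‖⁻¹ * ‖b‖| ≤ ‖y‖⁻¹ * ε' := by
    have e : 1 - ‖y‖⁻¹ * ‖b‖ = ‖y‖⁻¹ * (‖y‖ - ‖b‖) := by field_simp
    rw [e, abs_mul, abs_of_pos (show (0:ℝ) < ‖y‖⁻¹ by positivity)]
    exact mul_le_mul_of_nonneg_left habs (by positivity)
  have n4 : ‖y‖⁻¹ * ε' + ‖y‖⁻¹ * ε' = ε := by
    rw [hε'def]; field_simp; norm_num
  calc ‖(1 - ‖y‖⁻¹ * ‖b‖) • u + ‖y‖⁻¹ • (‖b‖ • u - y)‖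
      ≤ ‖(1 - ‖y‖⁻¹ * ‖b‖) • u‖ + ‖‖y‖⁻¹ • (‖b‖ • u - y)‖ := norm_add_le _ _
    _ ≤ ε := by linarith


end Aux

/-- For Banach spaces `X`, `Y`, `1 < p < ∞`, `x ≠ 0`, `y ≠ 0`: if `(x, y)` is a semi denting
point of `B_{X ⊕_p Y}`, then `x/‖x‖` is a semi denting point of `B_X` and `y/‖y‖` is a semi
denting point of `B_Y`. -/
theorem isSemiDentingPointOfBall_of_prod
    {X Y : Type*} [NormedAddCommGroup X] [NormedSpace ℝ X] [CompleteSpace X]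
    [NormedAddCommGroup Y] [NormedSpace ℝ Y] [CompleteSpace Y]
    (p : ENNReal) [Fact (1 ≤ p)] (hp1 : 1 < p) (hp : p ≠ ⊤)
    (x : X) (y : Y) (hx : x ≠ 0) (hy : y ≠ 0)
    (h : IsSemiDentingPointOfBall ((WithLp.equiv p (X × Y)).symm (x, y))) :
    IsSemiDentingPointOfBall (‖x‖⁻¹ • x) ∧ IsSemiDentingPointOfBall (‖y‖⁻¹ • y) := by
  exact ⟨myAuxFst p hp x y hx h, myAuxSnd p hp x y hy h⟩
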